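/- Let a_1,...,a_n be nonzero rationals and, for 1 ≤ j ≤ k, let (A_{j,1},...,A_{j,n}) be integer vectors none of which is a rational multiple of (a_1,...,a_n). Then for any rationals b_1,...,b_k, there exist integers λ_1,...,λ_n with a_1λ_1 + ... + a_nλ_n = 0 and A_{j,1}λ_1 + ... + A_{j,n}λ_n ≠ b_j for every j with 1 ≤ j ≤ k. -/

import Mathlib

/-- The linear form with coefficients `c`. -/
private def coeffForm {n : ℕ} (c : Fin n → ℚ) : (Fin n → ℚ) →ₗ[ℚ] ℚ where
  toFun x := ∑ i, c i * x i
  map_add' x y := by simp [mul_add, Finset.sum_add_distrib]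
  map_smul' r x := by simp [Finset.mul_sum, mul_left_comm]

private lemma coeffForm_apply {n : ℕ} (c : Fin n → ℚ) (x : Fin n → ℚ) :
    coeffForm c x = ∑ i, c i * x i := rfl

/-- A rational solution avoiding the hyperplanes through the origin. -/
private lemma rat_sol {n k : ℕ} (a : Fin n → ℚ)
    (A : Fin k → Fin n → ℤ)
    (hA : ∀ j, ¬ ∃ q : ℚ, ∀ i, (A j i : ℚ) = q * a i) :
    ∃ x : Fin n → ℚ, ∑ i, a i * x i = 0 ∧ ∀ j, ∑ i, (A j i : ℚ) * x i ≠ 0 := by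
  set f : (Fin n → ℚ) →ₗ[ℚ] ℚ := coeffForm a with hf
  set g : Fin k → (Fin n → ℚ) →ₗ[ℚ] ℚ := fun j => coeffForm (fun i => (A j i : ℚ)) with hg
  set E := LinearMap.ker f
  set p : Fin k → Subspace ℚ E := fun j => LinearMap.ker ((g j).comp E.subtype) with hp
  have hne : ∀ j, p j ≠ ⊤ := by
    intro j htop
    apply hA j
    have hker : LinearMap.ker f ≤ LinearMap.ker (g j) := by
      intro x hx
      have : (⟨x, hx⟩ : E) ∈ p j := htop ▸ Submodule.mem_top
      simpa [hp] using this
    have hmem : g j ∈ Submodule.span ℚ (Set.range (fun _ : Unit => f)) := by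
      apply mem_span_of_iInf_ker_le_ker (L := fun _ : Unit => f)
      simpa using hker
    rw [Set.range_const, Submodule.mem_span_singleton] at hmem
    obtain ⟨q, hq⟩ := hmem
    refine ⟨q, fun i => ?_⟩
    have := LinearMap.congr_fun hq (Pi.single i 1)
    simp only [hg, hf, coeffForm_apply, LinearMap.smul_apply, smul_eq_mul,
      Pi.single_apply, mul_ite, mul_one, mul_zero, Finset.sum_ite_eq',
      Finset.mem_univ, if_true, Finset.mul_sum] at this
    rw [this]
  have hcov : (⋃ j, ((p j : Set E))) ≠ Set.univ := by
    intro h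
    obtain ⟨j, hj⟩ := Subspace.exists_eq_top_of_iUnion_eq_univ h
    exact hne j hj
  obtain ⟨e, he⟩ := Set.ne_univ_iff_exists_notMem _ |>.1 hcov
  rw [Set.mem_iUnion] at he
  push_neg at he
  refine ⟨(e : Fin n → ℚ), ?_, fun j => ?_⟩
  · have h2 : f (e : Fin n → ℚ) = 0 := LinearMap.mem_ker.mp e.2
    exact h2
  · intro h0
    apply he j
    simp only [hp, SetLike.mem_coe, LinearMap.mem_ker, LinearMap.comp_apply,
      Submodule.subtype_apply]
    simpa [hg, coeffForm_apply] using h0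

/-- An integer solution of a nondegenerate rational linear equation avoiding
finitely many affine hyperplanes, none of which is a multiple of the equation. -/
theorem stmt_3 (n k : ℕ) (a : Fin n → ℚ) (ha : ∀ i, a i ≠ 0)
    (A : Fin k → Fin n → ℤ)
    (hA : ∀ j, ¬ ∃ q : ℚ, ∀ i, (A j i : ℚ) = q * a i)
    (b : Fin k → ℚ) :
    ∃ l : Fin n → ℤ, ∑ i, a i * (l i : ℚ) = 0 ∧
      ∀ j, ∑ i, (A j i : ℚ) * (l i : ℚ) ≠ b j := by
  obtain ⟨x, hx0, hxj⟩ := rat_sol a A hA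
  set D : ℕ := ∏ i, (x i).den with hD
  have hDpos : 0 < D := Finset.prod_pos fun i _ => (x i).pos
  have hz : ∀ i, ∃ z : ℤ, (D : ℚ) * x i = z := by
    intro i
    have hdvd : (x i).den ∣ D := Finset.dvd_prod_of_mem _ (Finset.mem_univ i)
    obtain ⟨m, hm⟩ := hdvd
    refine ⟨(x i).num * m, ?_⟩
    have hden : ((x i).den : ℚ) * x i = (x i).num := by
      rw [mul_comm, Rat.mul_den_eq_num]
    push_cast [hm]
    rw [mul_right_comm, hden]
  choose z hzeq using hz
  set c : Fin k → ℚ := fun j => ∑ i, (A j i : ℚ) * x i with hc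
  set S : Finset ℚ := insert 0 (Finset.image (fun j => b j / ((D : ℚ) * c j)) Finset.univ) with hS
  have hfin : {t : ℕ | ((t : ℚ)) ∈ S}.Finite :=
    S.finite_toSet.preimage (fun u _ v _ h => Nat.cast_injective h)
  obtain ⟨t, ht⟩ := hfin.infinite_compl.nonempty
  have htS : ((t : ℚ)) ∉ S := ht
  refine ⟨fun i => t * z i, ?_, ?_⟩
  · have : ∀ i, a i * ((t * z i : ℤ) : ℚ) = (t : ℚ) * (D : ℚ) * (a i * x i) := by
      intro i
      push_cast
      rw [← hzeq i]; ring
    simp only [this, ← Finset.mul_sum, hx0, mul_zero]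
  · intro j hbj
    apply htS
    have hsum : ∑ i, ((A j i : ℚ)) * ((t * z i : ℤ) : ℚ) = (t : ℚ) * ((D : ℚ) * c j) := by
      have : ∀ i, ((A j i : ℚ)) * ((t * z i : ℤ) : ℚ) = (t : ℚ) * (D : ℚ) * ((A j i : ℚ) * x i) := by
        intro i; push_cast; rw [← hzeq i]; ring
      simp only [this, ← Finset.mul_sum, hc]; ring
    rw [hsum] at hbj
    have hDc : (D : ℚ) * c j ≠ 0 :=
      mul_ne_zero (by positivity) (hxj j)
    have : (t : ℚ) = b j / ((D : ℚ) * c j) := by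
      field_simp [hDc] at hbj ⊢
      rw [eq_div_iff (right_ne_zero_of_mul hDc)]
      linarith [hbj]
    rw [hS]
    exact Finset.mem_insert_of_mem (Finset.mem_image.2 ⟨j, Finset.mem_univ j, this.symm⟩)
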